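/- Let λ : (0,∞) → (0,∞) be a continuous increasing function with ∫_1^∞ dt/λ(t) < ∞, and let δ > 0. Then there exist a real number b > 1 and a nonnegative C² function κ : [0,∞) → [0,∞) such that: (i) κ′(t) ≥ 0 and κ′(t) + t·κ″(t) ≥ 0 for all t > 0; (ii) κ″(t) ≤ 0 for all t ≥ b²; (iii) κ′(t) + t·κ″(t) ≥ 1/λ(t) for all t ≥ b²; and (iv) κ(t) ≤ δ·log t for all t ≥ b². -/

import Mathlib

open Set MeasureTheory intervalIntegral

/-- Real-variable core of Lemma 4.1: given a continuous increasing `λ : (0,∞) → (0,∞)` with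
`∫_1^∞ dt/λ(t) < ∞` and `δ > 0`, there are `b > 1` and a nonnegative `C²` function
`κ : [0,∞) → [0,∞)` with `κ′ ≥ 0` and `κ′(t) + tκ″(t) ≥ 0` for `t > 0`, `κ″(t) ≤ 0` and
`κ′(t) + tκ″(t) ≥ 1/λ(t)` and `κ(t) ≤ δ log t` for `t ≥ b²`. -/
theorem stmt_6 (lam : ℝ → ℝ)
    (hlam_pos : ∀ t, 0 < t → 0 < lam t)
    (hlam_cont : ContinuousOn lam (Ioi 0))
    (hlam_mono : MonotoneOn lam (Ioi 0))
    (hlam_int : MeasureTheory.IntegrableOn (fun t => 1 / lam t) (Ioi 1))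
    (δ : ℝ) (hδ : 0 < δ) :
    ∃ (b : ℝ) (κ : ℝ → ℝ), 1 < b ∧
      ContDiffOn ℝ 2 κ (Ici 0) ∧
      (∀ t, 0 ≤ t → 0 ≤ κ t) ∧
      (∀ t, 0 < t → 0 ≤ deriv κ t ∧ 0 ≤ deriv κ t + t * deriv (deriv κ) t) ∧
      (∀ t, b ^ 2 ≤ t → deriv (deriv κ) t ≤ 0) ∧
      (∀ t, b ^ 2 ≤ t → 1 / lam t ≤ deriv κ t + t * deriv (deriv κ) t) ∧
      (∀ t, b ^ 2 ≤ t → κ t ≤ δ * Real.log t) := by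
  -- ## Step 1: choose `x ≥ 1` with small tail integral
  obtain ⟨x, hx1, hxtail⟩ : ∃ x : ℝ, 1 ≤ x ∧ ∫ t in Ioi x, 1 / lam t ≤ δ / 8 := by
    have h1 : Filter.Tendsto (fun y => ∫ t in (1:ℝ)..y, 1 / lam t) Filter.atTop
        (nhds (∫ t in Ioi (1:ℝ), 1 / lam t)) :=
      MeasureTheory.intervalIntegral_tendsto_integral_Ioi 1 hlam_int Filter.tendsto_id
    have h2 : ∀ᶠ y in Filter.atTop, (∫ t in Ioi y, 1 / lam t)
        = (∫ t in Ioi (1:ℝ), 1 / lam t) - ∫ t in (1:ℝ)..y, 1 / lam t := by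
      filter_upwards [Filter.eventually_ge_atTop (1:ℝ)] with y hy
      rw [intervalIntegral.integral_of_le hy, ← Set.Ioc_union_Ioi_eq_Ioi hy,
        MeasureTheory.setIntegral_union (Set.Ioc_disjoint_Ioi le_rfl) measurableSet_Ioi
          (hlam_int.mono_set Set.Ioc_subset_Ioi_self)
          (hlam_int.mono_set (Set.Ioi_subset_Ioi hy))]
      ring
    have h3 : Filter.Tendsto (fun y => ∫ t in Ioi y, 1 / lam t) Filter.atTop (nhds 0) := by
      have h4 := (tendsto_const_nhds (x := ∫ t in Ioi (1:ℝ), 1 / lam t)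
        (f := Filter.atTop (α := ℝ))).sub h1
      rw [sub_self] at h4
      exact h4.congr' (by filter_upwards [h2] with y hy using hy.symm)
    have h5 := h3.eventually_le_const (by positivity : (0:ℝ) < δ / 8)
    obtain ⟨x, hx1, hx2⟩ := (h5.and (Filter.eventually_ge_atTop (1:ℝ))).exists
    exact ⟨x, hx2, hx1⟩
  -- ## Step 2: basic constants
  set t0 : ℝ := 2 * x with ht0def
  have hxpos : 0 < x := lt_of_lt_of_le one_pos hx1
  have ht0_pos : 0 < t0 := by positivity
  have ht0_2 : 2 ≤ t0 := by simp only [ht0def]; linarith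
  have ht0_1 : 1 < t0 := by linarith
  have hxt0 : x ≤ t0 := by simp only [ht0def]; linarith
  have hlam_t0_pos : 0 < lam t0 := hlam_pos _ ht0_pos
  have hinv_contOn : ContinuousOn (fun t => 1 / lam t) (Ioi 0) :=
    continuousOn_const.div hlam_cont (fun t ht => (hlam_pos t ht).ne')
  have hIoi_int : IntegrableOn (fun t => 1 / lam t) (Ioi x) :=
    hlam_int.mono_set (Set.Ioi_subset_Ioi hx1)
  have hIoi_nonneg : 0 ≤ᵐ[MeasureTheory.volume.restrict (Ioi x)] fun t => 1 / lam t := by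
    filter_upwards [MeasureTheory.self_mem_ae_restrict measurableSet_Ioi] with t ht
    exact le_of_lt (one_div_pos.2 (hlam_pos t (lt_trans hxpos ht)))
  have hIocIoi : ∀ a b : ℝ, x ≤ a → (∫ t in Ioc a b, 1 / lam t) ≤ ∫ t in Ioi x, 1 / lam t := by
    intro a b ha
    exact MeasureTheory.setIntegral_mono_set hIoi_int hIoi_nonneg
      (HasSubset.Subset.eventuallyLE (fun t ht => lt_of_le_of_lt ha ht.1))
  have hkey : t0 / lam t0 ≤ δ / 4 := by
    have hsub : Icc x t0 ⊆ Ioi 0 := fun t ht => lt_of_lt_of_le hxpos ht.1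
    have hii : IntervalIntegrable (fun t => 1 / lam t) MeasureTheory.volume x t0 :=
      (hinv_contOn.mono hsub).intervalIntegrable_of_Icc hxt0
    have hlb : x * (1 / lam t0) ≤ ∫ t in x..t0, 1 / lam t := by
      have hmono : ∀ t ∈ Icc x t0, (fun _ : ℝ => 1 / lam t0) t ≤ 1 / lam t := by
        intro t ht
        exact one_div_le_one_div_of_le (hlam_pos t (hsub ht))
          (hlam_mono (hsub ht) (Set.mem_Ioi.2 ht0_pos) ht.2)
      have := intervalIntegral.integral_mono_on hxt0 _root_.intervalIntegrable_const hii hmono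
      rw [intervalIntegral.integral_const, smul_eq_mul] at this
      calc x * (1 / lam t0) ≤ (t0 - x) * (1 / lam t0) := by
            have : x ≤ t0 - x := by simp only [ht0def]; linarith
            exact mul_le_mul_of_nonneg_right this (le_of_lt (one_div_pos.2 hlam_t0_pos))
        _ ≤ _ := this
    have hub : (∫ t in x..t0, 1 / lam t) ≤ δ / 8 := by
      rw [intervalIntegral.integral_of_le hxt0]
      exact le_trans (hIocIoi x t0 le_rfl) hxtail
    have h9 : x * (1 / lam t0) ≤ δ / 8 := le_trans hlb hub
    have : t0 / lam t0 = 2 * (x * (1 / lam t0)) := by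
      simp only [ht0def]; ring
    rw [this]; linarith
  -- ## Step 3: the functions
  set c : ℝ := 1 / lam t0 with hcdef
  have hcpos : 0 < c := one_div_pos.2 hlam_t0_pos
  set θ : ℝ → ℝ := fun r => 1 / lam (max r t0) with hθdef
  set Θ : ℝ → ℝ := fun s => ∫ r in (0:ℝ)..s, θ r with hΘdef
  set h : ℝ → ℝ := fun s => Θ (max s t0) / max s t0 with hhdef
  set h' : ℝ → ℝ := fun s => (θ s - h s) / max s t0 with hh'def
  set κ : ℝ → ℝ := fun t => ∫ s in (0:ℝ)..t, h s with hκdef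
  have hmax_pos : ∀ s : ℝ, 0 < max s t0 := fun s => lt_of_lt_of_le ht0_pos (le_max_right _ _)
  have hθ_pos : ∀ r, 0 < θ r := fun r => one_div_pos.2 (hlam_pos _ (hmax_pos r))
  have hθ_cont : Continuous θ := by
    have hm : Continuous fun r : ℝ => max r t0 := continuous_id.max continuous_const
    have : Continuous fun r : ℝ => lam (max r t0) :=
      hlam_cont.comp_continuous hm (fun r => hmax_pos r)
    exact continuous_const.div this (fun r => (hlam_pos _ (hmax_pos r)).ne')
  have hθ_anti : ∀ r r' : ℝ, r ≤ r' → θ r' ≤ θ r := by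
    intro r r' hrr
    exact one_div_le_one_div_of_le (hlam_pos _ (hmax_pos r))
      (hlam_mono (hmax_pos r) (hmax_pos r') (max_le_max hrr le_rfl))
  have hθ_const : ∀ r : ℝ, r ≤ t0 → θ r = c := by
    intro r hr; simp only [hθdef, hcdef, max_eq_right hr]
  have hθ_eq : ∀ r : ℝ, t0 ≤ r → θ r = 1 / lam r := by
    intro r hr; simp only [hθdef, max_eq_left hr]
  have hθ_int : ∀ a b : ℝ, IntervalIntegrable θ MeasureTheory.volume a b :=
    fun a b => hθ_cont.intervalIntegrable a b
  have hΘ_deriv : ∀ s, HasDerivAt Θ (θ s) s := by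
    intro s
    exact intervalIntegral.integral_hasDerivAt_right (hθ_int 0 s)
      (hθ_cont.stronglyMeasurable.stronglyMeasurableAtFilter) hθ_cont.continuousAt
  have hΘ_t0 : Θ t0 = t0 * c := by
    simp only [hΘdef]
    have heq : Set.EqOn θ (fun _ => c) (Set.uIcc 0 t0) := by
      intro r hr
      rw [Set.uIcc_of_le ht0_pos.le] at hr
      exact hθ_const r hr.2
    rw [intervalIntegral.integral_congr heq, intervalIntegral.integral_const, smul_eq_mul]
    ring
  have hΘ_nonneg : ∀ s : ℝ, 0 ≤ s → 0 ≤ Θ s := by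
    intro s hs
    exact intervalIntegral.integral_nonneg hs (fun r _ => (hθ_pos r).le)
  have h_nonneg : ∀ s, 0 ≤ h s :=
    fun s => div_nonneg (hΘ_nonneg _ (hmax_pos _).le) (hmax_pos _).le
  have h_eq_c : ∀ s : ℝ, s ≤ t0 → h s = c := by
    intro s hs
    simp only [hhdef]; simp only [max_eq_right hs]
    rw [hΘ_t0]; field_simp
  have h_eq : ∀ s : ℝ, t0 ≤ s → h s = Θ s / s := by
    intro s hs; rw [hhdef]; simp only [max_eq_left hs]
  have h'_zero : ∀ s : ℝ, s ≤ t0 → h' s = 0 := by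
    intro s hs
    simp only [hh'def]; simp only [hθ_const s hs, h_eq_c s hs, sub_self, zero_div]
  have h'_eq : ∀ s : ℝ, t0 ≤ s → h' s = (θ s - Θ s / s) / s := by
    intro s hs
    simp only [hh'def]; simp only [max_eq_left hs, h_eq s hs]
  -- ## Step 4: h is differentiable with derivative h'
  have hh_deriv : ∀ s, HasDerivAt h (h' s) s := by
    intro s
    rcases lt_trichotomy s t0 with hlt | heq | hgt
    · rw [h'_zero s hlt.le]
      have hev : h =ᶠ[nhds s] fun _ => c := by
        filter_upwards [Iio_mem_nhds hlt] with y hy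
        exact h_eq_c y (le_of_lt hy)
      exact (hasDerivAt_const s c).congr_of_eventuallyEq hev
    · subst heq
      rw [h'_zero t0 le_rfl]
      rw [← hasDerivWithinAt_univ, ← Set.Iic_union_Ici (a := t0)]
      apply HasDerivWithinAt.union
      · exact ((hasDerivWithinAt_const t0 (Iic t0) c).congr
          (fun y hy => h_eq_c y hy) (h_eq_c t0 le_rfl))
      · have hg : HasDerivAt (fun u => Θ u / u) ((θ t0 * t0 - Θ t0 * 1) / t0 ^ 2) t0 :=
          (hΘ_deriv t0).div (hasDerivAt_id t0) ht0_pos.ne'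
        have hval : (θ t0 * t0 - Θ t0 * 1) / t0 ^ 2 = 0 := by
          rw [hθ_const t0 le_rfl, hΘ_t0]; ring
        rw [hval] at hg
        exact (hg.hasDerivWithinAt).congr (fun y hy => h_eq y hy) (h_eq t0 le_rfl)
    · have hs0 : (0:ℝ) < s := lt_trans ht0_pos hgt
      have hg : HasDerivAt (fun u => Θ u / u) ((θ s * s - Θ s * 1) / s ^ 2) s :=
        (hΘ_deriv s).div (hasDerivAt_id s) hs0.ne'
      have hval : (θ s * s - Θ s * 1) / s ^ 2 = h' s := by
        rw [h'_eq s hgt.le, mul_one]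
        field_simp
      rw [hval] at hg
      have hev : (fun u => Θ u / u) =ᶠ[nhds s] h := by
        filter_upwards [Ioi_mem_nhds hgt] with y hy
        exact (h_eq y (le_of_lt hy)).symm
      exact hg.congr_of_eventuallyEq hev.symm
  have h_cont : Continuous h :=
    continuous_iff_continuousAt.2 fun s => (hh_deriv s).differentiableAt.continuousAt
  have h'_cont : Continuous h' := by
    rw [hh'def]
    exact (hθ_cont.sub h_cont).div (continuous_id.max continuous_const)
      (fun s => (hmax_pos s).ne')
  have hκ_deriv : ∀ t, HasDerivAt κ (h t) t := by
    intro t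
    exact intervalIntegral.integral_hasDerivAt_right (h_cont.intervalIntegrable 0 t)
      (h_cont.stronglyMeasurable.stronglyMeasurableAtFilter) h_cont.continuousAt
  have hdκ : deriv κ = h := funext fun t => (hκ_deriv t).deriv
  have hdh : deriv h = h' := funext fun s => (hh_deriv s).deriv
  have hκ_cd : ContDiff ℝ 2 κ := by
    rw [show (2 : WithTop ℕ∞) = 1 + 1 from by norm_num]
    rw [contDiff_succ_iff_deriv]
    refine ⟨fun t => (hκ_deriv t).differentiableAt, by simp, ?_⟩
    rw [hdκ, contDiff_one_iff_deriv]
    exact ⟨fun s => (hh_deriv s).differentiableAt, by rw [hdh]; exact h'_cont⟩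
  -- ## Step 5: key inequalities
  have hsum : ∀ t : ℝ, t0 ≤ t → h t + t * h' t = θ t := by
    intro t ht
    have htpos : (0:ℝ) < t := lt_of_lt_of_le ht0_pos ht
    rw [h'_eq t ht, h_eq t ht]
    field_simp
    ring
  have hΘ_lb : ∀ s : ℝ, 0 ≤ s → s * θ s ≤ Θ s := by
    intro s hs
    have hm := intervalIntegral.integral_mono_on hs
      (_root_.intervalIntegrable_const (c := θ s)) (hθ_int 0 s)
      (fun r hr => hθ_anti r s hr.2)
    rw [intervalIntegral.integral_const, smul_eq_mul, sub_zero] at hm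
    exact hm
  have h'_nonpos : ∀ t : ℝ, t0 ≤ t → h' t ≤ 0 := by
    intro t ht
    have htpos : (0:ℝ) < t := lt_of_lt_of_le ht0_pos ht
    rw [h'_eq t ht]
    apply div_nonpos_of_nonpos_of_nonneg _ htpos.le
    rw [sub_nonpos, le_div_iff₀ htpos]
    calc θ t * t = t * θ t := mul_comm _ _
      _ ≤ Θ t := hΘ_lb t htpos.le
  have hb2 : Real.sqrt t0 ^ 2 = t0 := Real.sq_sqrt ht0_pos.le
  -- ## Step 6: conclusion
  refine ⟨Real.sqrt t0, κ, ?_, ?_, ?_, ?_, ?_, ?_, ?_⟩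
  · rw [show (1:ℝ) = Real.sqrt 1 from Real.sqrt_one.symm]
    exact Real.sqrt_lt_sqrt zero_le_one ht0_1
  · exact hκ_cd.contDiffOn
  · intro t ht
    exact intervalIntegral.integral_nonneg ht (fun s _ => h_nonneg s)
  · intro t ht
    rw [hdκ, hdh]
    refine ⟨h_nonneg t, ?_⟩
    rcases le_or_gt t t0 with hle | hgt
    · rw [h'_zero t hle, mul_zero, add_zero]; exact h_nonneg t
    · rw [hsum t hgt.le]; exact (hθ_pos t).le
  · intro t ht
    rw [hb2] at ht
    rw [hdκ, hdh]
    exact h'_nonpos t ht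
  · intro t ht
    rw [hb2] at ht
    rw [hdκ, hdh, hsum t ht, hθ_eq t ht]
  · intro t ht
    rw [hb2] at ht
    have htpos : (0:ℝ) < t := lt_of_lt_of_le ht0_pos ht
    have hsplit : κ t = (∫ s in (0:ℝ)..t0, h s) + ∫ s in t0..t, h s := by
      simp only [hκdef]
      exact (intervalIntegral.integral_add_adjacent_intervals
        (h_cont.intervalIntegrable 0 t0) (h_cont.intervalIntegrable t0 t)).symm
    have hpart1 : (∫ s in (0:ℝ)..t0, h s) = t0 * c := by
      have heq : Set.EqOn h (fun _ => c) (Set.uIcc 0 t0) := by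
        intro s hs
        rw [Set.uIcc_of_le ht0_pos.le] at hs
        exact h_eq_c s hs.2
      rw [intervalIntegral.integral_congr heq, intervalIntegral.integral_const, smul_eq_mul]
      ring
    have hct0 : t0 * c ≤ δ / 4 := by
      rw [hcdef, mul_one_div]; exact hkey
    have hΘ_ub : ∀ s : ℝ, t0 ≤ s → Θ s ≤ δ / 2 := by
      intro s hs
      have hsplit2 : Θ s = Θ t0 + ∫ r in t0..s, θ r := by
        simp only [hΘdef]
        exact (intervalIntegral.integral_add_adjacent_intervals
          (hθ_int 0 t0) (hθ_int t0 s)).symm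
      have h2 : (∫ r in t0..s, θ r) ≤ δ / 8 := by
        rw [intervalIntegral.integral_of_le hs]
        have heq2 : Set.EqOn θ (fun r => 1 / lam r) (Set.Ioc t0 s) :=
          fun r hr => hθ_eq r hr.1.le
        rw [MeasureTheory.setIntegral_congr_fun measurableSet_Ioc heq2]
        exact le_trans (hIocIoi t0 s hxt0) hxtail
      rw [hsplit2, hΘ_t0]
      linarith
    have hmono2 : ∀ s ∈ Icc t0 t, h s ≤ (δ/2) / s := by
      intro s hs
      have hspos : (0:ℝ) < s := lt_of_lt_of_le ht0_pos hs.1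
      rw [h_eq s hs.1]
      gcongr
      exact hΘ_ub s hs.1
    have hint2 : (∫ s in t0..t, h s) ≤ ∫ s in t0..t, (δ/2) / s := by
      refine intervalIntegral.integral_mono_on ht (h_cont.intervalIntegrable t0 t) ?_ hmono2
      refine ContinuousOn.intervalIntegrable_of_Icc ht ?_
      exact continuousOn_const.div continuousOn_id
        (fun s hs => (lt_of_lt_of_le ht0_pos hs.1).ne')
    have hval2 : (∫ s in t0..t, (δ/2) / s) = δ/2 * (Real.log t - Real.log t0) := by
      have hrw : ∀ s : ℝ, (δ/2)/s = (δ/2) * (1/s) := fun s => by rw [mul_one_div]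
      simp_rw [hrw]
      have h0mem : (0:ℝ) ∉ Set.uIcc t0 t := by
        rw [Set.uIcc_of_le ht]
        intro hmem
        linarith [hmem.1]
      rw [intervalIntegral.integral_const_mul, integral_one_div h0mem,
        Real.log_div htpos.ne' ht0_pos.ne']
    have hlog2 : (1:ℝ)/2 ≤ Real.log t := by
      have h2t : (2:ℝ) ≤ t := le_trans ht0_2 ht
      have hll := Real.log_le_log (by norm_num : (0:ℝ) < 2) h2t
      have hl2 := Real.log_two_gt_d9
      linarith
    have hlogt0 : 0 ≤ Real.log t0 := Real.log_nonneg (le_of_lt ht0_1)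
    have final : κ t ≤ t0 * c + (δ/2) * (Real.log t - Real.log t0) := by
      rw [hsplit, hpart1]
      have := le_trans hint2 (le_of_eq hval2)
      linarith
    nlinarith [mul_le_mul_of_nonneg_left hlog2 (le_of_lt (half_pos hδ)),
      mul_nonneg (le_of_lt (half_pos hδ)) hlogt0]
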